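/- The double integral ∫₀¹∫₀¹ ((b-1)²(a - 1/2) + (a-1)²(b - 1/2))/(a+b-2)² da db equals (1 - ln 2)/3. -/

import Mathlib

open Real MeasureTheory intervalIntegral Set

noncomputable def gg (b : ℝ) : ℝ :=
  1/2 - b*((b-1)*Real.log (b-1)) + ((b-1)^2+(b-1))*Real.log (b-2) + (b-1)^2/(b-2)

noncomputable def GG (b : ℝ) : ℝ :=
  b/2 + ((b-1)^3/3 + (b-1)^2/2) * Real.log (b-2)
    - ((b-1)^2/3 + (b-1)/2) * ((b-1)*Real.log (b-1))
    + (b-1)^3/9 + (b-1)^2/4 - (b-2)^3/9 - (b-2)^2/4 + Real.log (b-2)/6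

lemma inner_eq (b : ℝ) (hb : b ∈ Set.uIcc (0:ℝ) 1) :
    (∫ a in (0:ℝ)..1,
        ((b - 1) ^ 2 * (a - 1 / 2) + (a - 1) ^ 2 * (b - 1 / 2)) / (a + b - 2) ^ 2) = gg b := by
  rw [Set.uIcc_of_le (by norm_num : (0:ℝ) ≤ 1)] at hb
  obtain ⟨hb0, hb1⟩ := hb
  rcases eq_or_lt_of_le hb1 with rfl | hb1
  · -- b = 1 : integrand is a.e. 1/2
    have h : ∀ᵐ x : ℝ, x ∈ Set.uIoc (0:ℝ) 1 →
        ((1 - 1) ^ 2 * (x - 1 / 2) + (x - 1) ^ 2 * (1 - 1 / 2)) / (x + 1 - 2) ^ 2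
          = (1/2 : ℝ) := by
      filter_upwards [compl_mem_ae_iff.mpr (volume_singleton (a := (1:ℝ)))] with x hx _
      have hx1 : x - 1 ≠ 0 := sub_ne_zero.mpr hx
      have : (x + 1 - 2) = x - 1 := by ring
      rw [this]
      field_simp
      ring
    rw [intervalIntegral.integral_congr_ae h]
    simp [gg]
  · -- b < 1 : use the fundamental theorem of calculus
    have hne : ∀ a ∈ Set.uIcc (0:ℝ) 1, a + b - 2 ≠ 0 := by
      intro a ha
      rw [Set.uIcc_of_le (by norm_num : (0:ℝ) ≤ 1)] at ha
      nlinarith [ha.2]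
    have hderiv : ∀ a ∈ Set.uIcc (0:ℝ) 1,
        HasDerivAt (fun a => (b - 1/2)*a - ((b-1)^2+(b-1))*Real.log (a+b-2)
            - (b-1)^2/(a+b-2))
          (((b - 1) ^ 2 * (a - 1 / 2) + (a - 1) ^ 2 * (b - 1 / 2)) / (a + b - 2) ^ 2) a := by
      intro a ha
      have hu := hne a ha
      have h1 : HasDerivAt (fun a : ℝ => a + b - 2) 1 a := by
        simpa using ((hasDerivAt_id a).add_const b).sub_const 2
      have hlog : HasDerivAt (fun a : ℝ => Real.log (a+b-2)) ((a+b-2)⁻¹) a := by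
        simpa [Function.comp_def] using (Real.hasDerivAt_log hu).comp a h1
      have hinv : HasDerivAt (fun a : ℝ => (b-1)^2/(a+b-2))
          (-((b-1)^2 * 1) / (a+b-2)^2) a := by
        simpa [Pi.div_def] using ((hasDerivAt_const a ((b-1)^2)).div h1 hu)
      have := (((hasDerivAt_id a).const_mul (b - 1/2)).sub
        (hlog.const_mul ((b-1)^2+(b-1)))).sub hinv
      exact this.congr_deriv (by field_simp; ring)
    have hint : IntervalIntegrable
        (fun a => ((b - 1) ^ 2 * (a - 1 / 2) + (a - 1) ^ 2 * (b - 1 / 2)) / (a + b - 2) ^ 2)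
        volume 0 1 := by
      apply ContinuousOn.intervalIntegrable
      apply ContinuousOn.div
      · fun_prop
      · fun_prop
      · intro a ha
        exact pow_ne_zero 2 (hne a ha)
    rw [intervalIntegral.integral_eq_sub_of_hasDerivAt hderiv hint]
    have hb1' : b - 1 ≠ 0 := by linarith
    have hb2' : b - 2 ≠ 0 := by linarith
    have e1 : (1:ℝ) + b - 2 = b - 1 := by ring
    have e0 : (0:ℝ) + b - 2 = b - 2 := by ring
    simp only [gg, e1, e0]
    field_simp
    ring

theorem stmt_6 :
    ∫ b in (0:ℝ)..1, ∫ a in (0:ℝ)..1,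
        ((b - 1) ^ 2 * (a - 1 / 2) + (a - 1) ^ 2 * (b - 1 / 2)) / (a + b - 2) ^ 2 =
      (1 - Real.log 2) / 3 := by
  rw [intervalIntegral.integral_congr (g := gg) (fun b hb => inner_eq b hb)]
  have hml : Continuous fun b : ℝ => (b-1)*Real.log (b-1) :=
    Real.continuous_mul_log.comp (by fun_prop)
  have hlogc : ContinuousOn (fun b : ℝ => Real.log (b-2)) (Set.Icc (0:ℝ) 1) := by
    apply ContinuousOn.log
    · fun_prop
    · intro b hb; have := hb.2; intro h; nlinarith [hb.1]
  have hggcont : ContinuousOn gg (Set.Icc (0:ℝ) 1) := by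
    apply ContinuousOn.add
    apply ContinuousOn.add
    apply ContinuousOn.sub
    · fun_prop
    · exact (continuous_id.mul hml).continuousOn
    · exact (by fun_prop : ContinuousOn (fun b:ℝ => (b-1)^2+(b-1)) _).mul hlogc
    · apply ContinuousOn.div
      · fun_prop
      · fun_prop
      · intro b hb; have := hb.2; intro h; nlinarith [hb.1]
  have hcont : ContinuousOn GG (Set.Icc (0:ℝ) 1) := by
    apply ContinuousOn.add
    apply ContinuousOn.sub
    apply ContinuousOn.sub
    apply ContinuousOn.add
    apply ContinuousOn.add
    apply ContinuousOn.sub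
    apply ContinuousOn.add
    · fun_prop
    · exact (by fun_prop : ContinuousOn (fun b:ℝ => (b-1)^3/3+(b-1)^2/2) _).mul hlogc
    · exact ((by fun_prop : Continuous fun b:ℝ => (b-1)^2/3+(b-1)/2).mul hml).continuousOn
    · fun_prop
    · fun_prop
    · fun_prop
    · fun_prop
    · exact hlogc.div_const 6
  have hderiv : ∀ b ∈ Set.Ioo (0:ℝ) 1, HasDerivAt GG (gg b) b := by
    intro b hb
    have hb1 : b - 1 ≠ 0 := by nlinarith [hb.2]
    have hb2 : b - 2 ≠ 0 := by nlinarith [hb.2]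
    have h1 : HasDerivAt (fun b : ℝ => b - 1) 1 b := by
      simpa using (hasDerivAt_id b).sub_const 1
    have h2 : HasDerivAt (fun b : ℝ => b - 2) 1 b := by
      simpa using (hasDerivAt_id b).sub_const 2
    have hlog1 : HasDerivAt (fun b : ℝ => Real.log (b-1)) ((b-1)⁻¹) b := by
      simpa [Function.comp_def] using (Real.hasDerivAt_log hb1).comp b h1
    have hlog2 : HasDerivAt (fun b : ℝ => Real.log (b-2)) ((b-2)⁻¹) b := by
      simpa [Function.comp_def] using (Real.hasDerivAt_log hb2).comp b h2
    have hQ : HasDerivAt (fun b : ℝ => (b-1)^3/3 + (b-1)^2/2)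
        (3*(b-1)^2*1/3 + 2*(b-1)*1/2) b := by
      have := ((h1.pow 3).div_const 3).add ((h1.pow 2).div_const 2)
      exact this.congr_deriv (by push_cast; ring)
    have hR : HasDerivAt (fun b : ℝ => (b-1)^2/3 + (b-1)/2)
        (2*(b-1)*1/3 + 1/2) b := by
      have := ((h1.pow 2).div_const 3).add (h1.div_const 2)
      exact this.congr_deriv (by push_cast; ring)
    have hml : HasDerivAt (fun b : ℝ => (b-1)*Real.log (b-1))
        (1 * Real.log (b-1) + (b-1) * (b-1)⁻¹) b := h1.mul hlog1
    have hfull := (((((((hasDerivAt_id b).div_const 2).add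
        (hQ.mul hlog2)).sub (hR.mul hml)).add
        ((h1.pow 3).div_const 9)).add ((h1.pow 2).div_const 4)).sub
        ((h2.pow 3).div_const 9)).sub ((h2.pow 2).div_const 4) |>.add (hlog2.div_const 6)
    have : HasDerivAt GG _ b := hfull
    convert this using 1
    unfold gg
    push_cast
    field_simp
    ring
  have hint : IntervalIntegrable gg volume 0 1 := by
    apply ContinuousOn.intervalIntegrable
    rwa [Set.uIcc_of_le (by norm_num : (0:ℝ) ≤ 1)]
  have l4 : Real.log ((1:ℝ) - 1) = 0 := by norm_num
  rw [intervalIntegral.integral_eq_sub_of_hasDerivAt_of_le (by norm_num) hcont hderiv hint]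
  have l1 : Real.log ((1:ℝ) - 2) = 0 := by norm_num [show (1:ℝ)-2 = -1 by norm_num, Real.log_neg_eq_log]
  have l2 : Real.log ((0:ℝ) - 2) = Real.log 2 := by
    rw [show (0:ℝ)-2 = -2 by norm_num, Real.log_neg_eq_log]
  have l3 : Real.log ((0:ℝ) - 1) = 0 := by
    rw [show (0:ℝ)-1 = -1 by norm_num, Real.log_neg_eq_log, Real.log_one]
  simp only [GG, l1, l2, l3, l4]
  norm_num
  ring
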